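/- Fix N ≥ 1 and suppose (J_1,...,J_N, h) ∈ ℝ^{N+1}, ν ∈ [0,1], χ ∈ [0,1], and λ_1,...,λ_N ≥ 0 with ∑_{k=1}^N λ_k = 1 satisfy, for every k = 1,...,N, the relation ν λ_k = Λ( h - ∑_{j<k} J_j + ∑_{j>k} J_j + J_k ) - Λ( h - ∑_{j<k} J_j + ∑_{j>k} J_j - J_k ), where Λ(x) = e^{2x}/(1+e^{2x}). Then ν = Λ( h + ∑_{j=1}^N J_j ) - Λ( h - ∑_{j=1}^N J_j ). -/

import Mathlib

set_option maxRecDepth 4000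


/-- The logistic function `Λ(x) = e^{2x}/(1 + e^{2x})`. -/
noncomputable def Lam (x : ℝ) : ℝ := Real.exp (2 * x) / (1 + Real.exp (2 * x))

theorem stmt_10 (N : ℕ) (hN : 1 ≤ N) (J : Fin N → ℝ) (h ν χ : ℝ) (lam : Fin N → ℝ)
    (hν : ν ∈ Set.Icc (0 : ℝ) 1) (hχ : χ ∈ Set.Icc (0 : ℝ) 1)
    (hlam : ∀ k, 0 ≤ lam k) (hsum : ∑ k, lam k = 1)
    (hmatch : ∀ k : Fin N,
      ν * lam k =
        Lam (h - (∑ j ∈ Finset.univ.filter (fun j => j < k), J j)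
              + (∑ j ∈ Finset.univ.filter (fun j => k < j), J j) + J k)
        - Lam (h - (∑ j ∈ Finset.univ.filter (fun j => j < k), J j)
              + (∑ j ∈ Finset.univ.filter (fun j => k < j), J j) - J k)) :
    ν = Lam (h + ∑ j, J j) - Lam (h - ∑ j, J j) := by
  set g : ℕ → ℝ := fun m => Lam (h + (∑ j ∈ Finset.univ.filter (fun j : Fin N => m ≤ (j : ℕ)), J j)
      - ∑ j ∈ Finset.univ.filter (fun j : Fin N => (j : ℕ) < m), J j) with hg
  have key : ∀ k : Fin N, ν * lam k = g (k : ℕ) - g ((k : ℕ) + 1) := by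
    intro k
    rw [hmatch k, hg]; beta_reduce
    have h1 : (Finset.univ.filter (fun j : Fin N => j < k))
        = Finset.univ.filter (fun j : Fin N => (j : ℕ) < (k : ℕ)) := by
      apply Finset.filter_congr; intro j _; exact Iff.rfl
    have h2 : ∑ j ∈ Finset.univ.filter (fun j : Fin N => (k : ℕ) ≤ (j : ℕ)), J j
        = J k + ∑ j ∈ Finset.univ.filter (fun j : Fin N => k < j), J j := by
      have : Finset.univ.filter (fun j : Fin N => (k : ℕ) ≤ (j : ℕ))
          = insert k (Finset.univ.filter (fun j : Fin N => k < j)) := by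
        ext j
        simp only [Finset.mem_filter, Finset.mem_univ, true_and, Finset.mem_insert, Fin.lt_def]
        constructor
        · intro hj
          rcases eq_or_lt_of_le hj with h' | h'
          · left; exact (Fin.ext h'.symm)
          · right; exact h'
        · rintro (rfl | h'); · exact le_refl _
          · exact le_of_lt h'
      rw [this, Finset.sum_insert (by simp only [Finset.mem_filter, Finset.mem_univ, true_and]; exact lt_irrefl k)]
    have h3 : ∑ j ∈ Finset.univ.filter (fun j : Fin N => (j : ℕ) < (k : ℕ) + 1), J j
        = J k + ∑ j ∈ Finset.univ.filter (fun j : Fin N => (j : ℕ) < (k : ℕ)), J j := by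
      have : Finset.univ.filter (fun j : Fin N => (j : ℕ) < (k : ℕ) + 1)
          = insert k (Finset.univ.filter (fun j : Fin N => (j : ℕ) < (k : ℕ))) := by
        ext j
        simp only [Finset.mem_filter, Finset.mem_univ, true_and, Finset.mem_insert]
        constructor
        · intro hj
          rcases Nat.lt_succ_iff_lt_or_eq.mp hj with h' | h'
          · right; exact h'
          · left; exact Fin.ext h'
        · rintro (rfl | h'); · omega
          · omega
      rw [this, Finset.sum_insert (by simp only [Finset.mem_filter, Finset.mem_univ, true_and]; exact lt_irrefl _)]
    have h4 : Finset.univ.filter (fun j : Fin N => (k : ℕ) + 1 ≤ (j : ℕ))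
        = Finset.univ.filter (fun j : Fin N => k < j) := by
      apply Finset.filter_congr; intro j _; exact Iff.rfl
    rw [h1, h2, h3, h4]
    congr 1 <;> congr 1 <;> ring
  have hsum2 : ν = ∑ k : Fin N, (g (k : ℕ) - g ((k : ℕ) + 1)) := by
    calc ν = ν * ∑ k, lam k := by rw [hsum, mul_one]
    _ = ∑ k, ν * lam k := by rw [Finset.mul_sum]
    _ = _ := Finset.sum_congr rfl (fun k _ => key k)
  rw [hsum2, Fin.sum_univ_eq_sum_range (fun i => g i - g (i + 1)), Finset.sum_range_sub']
  have hg0 : g 0 = Lam (h + ∑ j, J j) := by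
    rw [hg]; beta_reduce
    have e1 : Finset.univ.filter (fun j : Fin N => 0 ≤ (j : ℕ)) = Finset.univ :=
      Finset.filter_true_of_mem (fun j _ => Nat.zero_le _)
    have e2 : Finset.univ.filter (fun j : Fin N => (j : ℕ) < 0) = ∅ :=
      Finset.filter_false_of_mem (fun j _ => Nat.not_lt_zero _)
    rw [e1, e2, Finset.sum_empty, sub_zero]
  have hgN : g N = Lam (h - ∑ j, J j) := by
    rw [hg]; beta_reduce
    have e1 : Finset.univ.filter (fun j : Fin N => N ≤ (j : ℕ)) = ∅ :=
      Finset.filter_false_of_mem (fun j _ => Nat.not_le.mpr j.isLt)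
    have e2 : Finset.univ.filter (fun j : Fin N => (j : ℕ) < N) = Finset.univ :=
      Finset.filter_true_of_mem (fun j _ => j.isLt)
    rw [e1, e2, Finset.sum_empty, add_zero, sub_eq_add_neg]
  rw [hg0, hgN]
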